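/- Let A, P, S be real M×M matrices such that P is symmetric positive definite, S is symmetric positive definite, and AᵀP + PA + S = 0. Then every differentiable function δ : ℝ → ℝ^M satisfying δ'(t) = Aδ(t) for all t ≥ 0 converges to zero: ‖δ(t)‖ → 0 as t → ∞. -/

import Mathlib

open Matrix Filter

section Aux

variable {M : ℕ}

/-- The Euclidean real inner product is the dot product. -/
lemma euclid_inner_eq_dot (x y : EuclideanSpace ℝ (Fin M)) :
    (inner ℝ x y : ℝ)
      = (WithLp.equiv 2 (Fin M → ℝ) x) ⬝ᵥ (WithLp.equiv 2 (Fin M → ℝ) y) := by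
  simp only [PiLp.inner_apply, dotProduct, RCLike.inner_apply, conj_trivial]
  exact Finset.sum_congr rfl fun i _ => mul_comm _ _

lemma equiv_toEuclideanLin (Q : Matrix (Fin M) (Fin M) ℝ) (x : EuclideanSpace ℝ (Fin M)) :
    WithLp.equiv 2 (Fin M → ℝ) (Matrix.toEuclideanLin Q x)
      = Q.mulVec (WithLp.equiv 2 (Fin M → ℝ) x) := by
  simp [Matrix.toEuclideanLin_apply]

/-- Translate the Euclidean inner ℝ product of `x` with the matrix action on `x`
into a `dotProduct` statement. -/
lemma inner_toEuclideanLin_eq_dot (Q : Matrix (Fin M) (Fin M) ℝ)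
    (x : EuclideanSpace ℝ (Fin M)) :
    (inner ℝ x (Matrix.toEuclideanLin Q x) : ℝ)
      = (WithLp.equiv 2 (Fin M → ℝ) x) ⬝ᵥ Q.mulVec (WithLp.equiv 2 (Fin M → ℝ) x) := by
  rw [euclid_inner_eq_dot, equiv_toEuclideanLin]

/-- Lower bound for a positive definite quadratic form. -/
lemma posdef_quad_lower (Q : Matrix (Fin M) (Fin M) ℝ) (hQ : Q.PosDef)
    [Nontrivial (EuclideanSpace ℝ (Fin M))] :
    ∃ c > 0, ∀ x : EuclideanSpace ℝ (Fin M),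
      c * ‖x‖ ^ 2 ≤ (inner ℝ x (Matrix.toEuclideanLin Q x) : ℝ) := by
  set f : EuclideanSpace ℝ (Fin M) → ℝ := fun x => inner ℝ x (Matrix.toEuclideanLin Q x) with hf
  have hfc : Continuous f := by
    have hQc : Continuous fun x : EuclideanSpace ℝ (Fin M) => Matrix.toEuclideanLin Q x :=
      LinearMap.continuous_of_finiteDimensional _
    exact continuous_id.inner hQc
  have hsne : (Metric.sphere (0 : EuclideanSpace ℝ (Fin M)) 1).Nonempty :=
    NormedSpace.sphere_nonempty.2 zero_le_one
  obtain ⟨u, hu, hmin⟩ :=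
    (isCompact_sphere (0 : EuclideanSpace ℝ (Fin M)) 1).exists_isMinOn hsne hfc.continuousOn
  have hun : ‖u‖ = 1 := by simpa using (mem_sphere_zero_iff_norm.1 hu)
  have hu0 : u ≠ 0 := by intro h; rw [h] at hun; simp at hun
  have hfu : 0 < f u := by
    have hv0 : (WithLp.equiv 2 (Fin M → ℝ)) u ≠ 0 := by
      simpa [WithLp.equiv] using hu0
    have := hQ.dotProduct_mulVec_pos hv0
    simpa [hf, inner_toEuclideanLin_eq_dot] using this
  refine ⟨f u, hfu, fun x => ?_⟩
  by_cases hx : x = 0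
  · simp [hx, hf]
  · have hnx : (0 : ℝ) < ‖x‖ := norm_pos_iff.2 hx
    set w : EuclideanSpace ℝ (Fin M) := ‖x‖⁻¹ • x with hwdef
    have hw : w ∈ Metric.sphere (0 : EuclideanSpace ℝ (Fin M)) 1 := by
      simp [hwdef, norm_smul, abs_of_pos (inv_pos.2 hnx), inv_mul_cancel₀ hnx.ne']
    have hxw : x = ‖x‖ • w := by
      simp [hwdef, smul_smul, mul_inv_cancel₀ hnx.ne']
    have hfx : f x = ‖x‖ ^ 2 * f w := by
      calc f x = inner ℝ (‖x‖ • w) ((Matrix.toEuclideanLin Q) (‖x‖ • w)) := by rw [← hxw]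
        _ = ‖x‖ * (‖x‖ * inner ℝ w ((Matrix.toEuclideanLin Q) w)) := by
            rw [LinearMap.map_smul, real_inner_smul_left, real_inner_smul_right]
        _ = ‖x‖ ^ 2 * f w := by ring
    have hmw : f u ≤ f w := hmin hw
    calc f u * ‖x‖ ^ 2 ≤ f w * ‖x‖ ^ 2 := by nlinarith [sq_nonneg ‖x‖]
      _ = f x := by rw [hfx]; ring

end Aux

/-- If `P` and `S` are symmetric positive definite real matrices with
`AᵀP + PA + S = 0`, then every differentiable `δ : ℝ → ℝ^M` (Euclidean space)
satisfying `δ'(t) = Aδ(t)` for all `t ≥ 0` converges to zero: `‖δ(t)‖ → 0` as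
`t → ∞`. -/
theorem lyapunov_implies_state_convergence
    (M : ℕ)
    (A P S : Matrix (Fin M) (Fin M) ℝ)
    (hP : P.PosDef) (hS : S.PosDef)
    (hLyap : Aᵀ * P + P * A + S = 0)
    (δ : ℝ → EuclideanSpace ℝ (Fin M))
    (hδ : Differentiable ℝ δ)
    (hode : ∀ t : ℝ, 0 ≤ t →
      deriv δ t = (WithLp.equiv 2 (Fin M → ℝ)).symm
        (A.mulVec ((WithLp.equiv 2 (Fin M → ℝ)) (δ t)))) :
    Tendsto (fun t => ‖δ t‖) atTop (nhds 0) := by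
  rcases subsingleton_or_nontrivial (EuclideanSpace ℝ (Fin M)) with hsub | hnt
  · have h0 : ∀ t, δ t = 0 := fun t => Subsingleton.elim _ _
    simp only [h0, norm_zero]
    exact tendsto_const_nhds
  -- linear maps
  set Pl := Matrix.toEuclideanLin P with hPl
  set Al := Matrix.toEuclideanLin A with hAl
  set Sl := Matrix.toEuclideanLin S with hSl
  have hPlc : Continuous fun x => Pl x := LinearMap.continuous_of_finiteDimensional _
  -- the ODE as a HasDerivAt statement
  have hδ' : ∀ t : ℝ, 0 ≤ t → HasDerivAt δ (Al (δ t)) t := by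
    intro t ht
    have h := (hδ t).hasDerivAt
    rw [hode t ht] at h
    simpa [hAl, Matrix.toEuclideanLin_apply] using h
  -- Lyapunov function
  set V : ℝ → ℝ := fun t => inner ℝ (δ t) (Pl (δ t)) with hV
  -- key algebraic identity coming from the Lyapunov equation
  have hkey : ∀ y : EuclideanSpace ℝ (Fin M),
      (inner ℝ y (Pl (Al y)) : ℝ) + (inner ℝ (Al y) (Pl y) : ℝ)
        = -(inner ℝ y (Sl y) : ℝ) := by
    intro y
    set v : Fin M → ℝ := WithLp.equiv 2 (Fin M → ℝ) y with hv
    have h1 : (inner ℝ y (Pl (Al y)) : ℝ) = v ⬝ᵥ ((P * A) *ᵥ v) := by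
      rw [hPl, hAl, euclid_inner_eq_dot, equiv_toEuclideanLin, equiv_toEuclideanLin,
        Matrix.mulVec_mulVec]
    have h2 : (inner ℝ (Al y) (Pl y) : ℝ) = v ⬝ᵥ ((Aᵀ * P) *ᵥ v) := by
      rw [hPl, hAl, euclid_inner_eq_dot, equiv_toEuclideanLin, equiv_toEuclideanLin,
        ← Matrix.mulVec_mulVec, Matrix.dotProduct_mulVec v Aᵀ, Matrix.vecMul_transpose]
    have h3 : (inner ℝ y (Sl y) : ℝ) = v ⬝ᵥ (S *ᵥ v) := by
      rw [hSl, inner_toEuclideanLin_eq_dot]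
    have hSm : S = -(Aᵀ * P + P * A) := (neg_eq_of_add_eq_zero_right hLyap).symm
    rw [h1, h2, h3, hSm]
    simp [Matrix.add_mulVec, Matrix.neg_mulVec, dotProduct_add, dotProduct_neg]
    ring
  have hVderiv : ∀ t : ℝ, 0 ≤ t →
      HasDerivAt V (-(inner ℝ (δ t) (Sl (δ t)) : ℝ)) t := by
    intro t ht
    have hPd : HasDerivAt (fun s => Pl (δ s)) (Pl (Al (δ t))) t := by
      have := (Pl.toContinuousLinearMap.hasFDerivAt (x := δ t)).comp_hasDerivAt t (hδ' t ht)
      exact this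
    have h := (hδ' t ht).inner ℝ hPd
    have heq : (inner ℝ (δ t) (Pl (Al (δ t))) : ℝ) + (inner ℝ (Al (δ t)) (Pl (δ t)) : ℝ)
        = -(inner ℝ (δ t) (Sl (δ t)) : ℝ) := hkey (δ t)
    rw [heq] at h
    exact h
  -- bounds
  obtain ⟨cS, hcS, hSlow⟩ := posdef_quad_lower S hS
  obtain ⟨cP, hcP, hPlow⟩ := posdef_quad_lower P hP
  set CP : ℝ := ‖Pl.toContinuousLinearMap‖ + 1 with hCP
  have hCP0 : 0 < CP := by positivity
  have hPup : ∀ x : EuclideanSpace ℝ (Fin M), (inner ℝ x (Pl x) : ℝ) ≤ CP * ‖x‖ ^ 2 := by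
    intro x
    have hop := Pl.toContinuousLinearMap.le_opNorm x
    have hPlx : ‖Pl x‖ ≤ ‖Pl.toContinuousLinearMap‖ * ‖x‖ := by simpa using hop
    calc (inner ℝ x (Pl x) : ℝ) ≤ ‖x‖ * ‖Pl x‖ := real_inner_le_norm _ _
      _ ≤ CP * ‖x‖ ^ 2 := by nlinarith [norm_nonneg x, norm_nonneg (Pl x)]
  set k : ℝ := cS / CP with hk
  have hk0 : 0 < k := div_pos hcS hCP0
  have hkV : ∀ x : EuclideanSpace ℝ (Fin M),
      k * (inner ℝ x (Pl x) : ℝ) ≤ (inner ℝ x (Sl x) : ℝ) := by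
    intro x
    have h1 := hPup x
    have h2 := hSlow x
    have h3 : k * (inner ℝ x (Pl x) : ℝ) ≤ k * (CP * ‖x‖ ^ 2) :=
      mul_le_mul_of_nonneg_left h1 hk0.le
    have h4 : k * (CP * ‖x‖ ^ 2) = cS * ‖x‖ ^ 2 := by
      rw [hk]
      field_simp
    linarith
  -- decay of g t = V t * exp (k t)
  set g : ℝ → ℝ := fun t => V t * Real.exp (k * t) with hg
  have hVcont : Continuous V := (hδ.continuous).inner (hPlc.comp hδ.continuous)
  have hgderiv : ∀ t : ℝ, 0 ≤ t →
      HasDerivAt g (-(inner ℝ (δ t) (Sl (δ t)) : ℝ) * Real.exp (k * t)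
        + V t * (Real.exp (k * t) * k)) t := by
    intro t ht
    have he : HasDerivAt (fun s : ℝ => Real.exp (k * s)) (Real.exp (k * t) * k) t := by
      simpa [mul_comm] using ((hasDerivAt_id t).const_mul k).exp
    exact (hVderiv t ht).mul he
  have hanti : AntitoneOn g (Set.Ici (0:ℝ)) := by
    apply antitoneOn_of_deriv_nonpos (convex_Ici 0)
    · exact (hVcont.mul (Real.continuous_exp.comp
        (continuous_const.mul continuous_id))).continuousOn
    · intro t ht
      rw [interior_Ici] at ht
      exact (hgderiv t (le_of_lt ht)).differentiableAt.differentiableWithinAt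
    · intro t ht
      rw [interior_Ici] at ht
      rw [(hgderiv t ht.le).deriv]
      have h1 := hkV (δ t)
      have he : (0:ℝ) < Real.exp (k * t) := Real.exp_pos _
      nlinarith [he]
  have hVbound : ∀ t : ℝ, 0 ≤ t → V t ≤ V 0 * Real.exp (-(k * t)) := by
    intro t ht
    have hle := hanti (Set.self_mem_Ici) (Set.mem_Ici.2 ht) ht
    have hg0 : g 0 = V 0 := by simp [hg]
    rw [hg0] at hle
    have he : (0:ℝ) < Real.exp (k * t) := Real.exp_pos _
    have : V t ≤ V 0 / Real.exp (k * t) := by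
      rw [le_div_iff₀ he]; exact hle
    rw [Real.exp_neg]
    simpa [div_eq_mul_inv] using this
  -- squeeze
  have hsq : Tendsto (fun t => ‖δ t‖ ^ 2) atTop (nhds 0) := by
    apply squeeze_zero' (g := fun t => (V 0 / cP) * Real.exp (-(k * t)))
    · exact Eventually.of_forall fun t => by positivity
    · filter_upwards [eventually_ge_atTop (0:ℝ)] with t ht
      have h1 := hPlow (δ t)
      have h2 := hVbound t ht
      have h3 : cP * ‖δ t‖ ^ 2 ≤ V 0 * Real.exp (-(k*t)) := le_trans h1 h2
      rw [div_mul_eq_mul_div, le_div_iff₀ hcP]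
      nlinarith
    · have h1 : Tendsto (fun t : ℝ => k * t) atTop atTop :=
        Tendsto.const_mul_atTop hk0 tendsto_id
      have h2 : Tendsto (fun t : ℝ => Real.exp (-(k * t))) atTop (nhds 0) := by
        have h := Real.tendsto_exp_neg_atTop_nhds_zero.comp h1
        simpa [Function.comp_def] using h
      simpa using h2.const_mul (V 0 / cP)
  have hsqrt := (Real.continuous_sqrt.tendsto 0).comp hsq
  simp only [Function.comp_def] at hsqrt
  have hfun : (fun t => ‖δ t‖) = fun t => Real.sqrt (‖δ t‖ ^ 2) := by
    funext t; rw [Real.sqrt_sq (norm_nonneg _)]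
  rw [hfun]
  simpa using hsqrt
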